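/- If x^opt maximizes |xᴴy|²/‖x‖² over a finite codebook C of nonzero vectors, and h^opt = ((x^opt)ᴴy)/‖x^opt‖², then for every z ∈ C, ‖y - h^opt·x^opt‖ ≤ ‖y - h^opt·z‖. In other words, x^opt is a nearest neighbor in C to the point λ^opt·y with λ^opt = 1/h^opt (when h^opt ≠ 0). -/

import Mathlib

open Complex ComplexConjugate

/-- Property 1: If `xopt` maximizes `|xᴴy|²/‖x‖²` over a finite codebook `C`
of nonzero vectors and `hopt = ⟪xopt, y⟫/‖xopt‖²`, then for every `z ∈ C`,
`‖y - hopt • xopt‖ ≤ ‖y - hopt • z‖`: the GLRT-optimal codeword is a nearest neighbor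
in `C` to the point `λopt • y` with `λopt = 1/hopt`. -/
theorem stmt2 {T : ℕ} (C : Finset (EuclideanSpace ℂ (Fin T))) (y : EuclideanSpace ℂ (Fin T))
    (hC : ∀ z ∈ C, z ≠ 0) (xopt : EuclideanSpace ℂ (Fin T)) (hxopt : xopt ∈ C)
    (hmax : ∀ z ∈ C, ‖(inner ℂ z y : ℂ)‖ ^ 2 / ‖z‖ ^ 2 ≤ ‖(inner ℂ xopt y : ℂ)‖ ^ 2 / ‖xopt‖ ^ 2)
    (hopt : ℂ) (hh : hopt = (inner ℂ xopt y : ℂ) / ((‖xopt‖ ^ 2 : ℝ) : ℂ)) :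
    ∀ z ∈ C, ‖y - hopt • xopt‖ ≤ ‖y - hopt • z‖ := by
  intro z hz
  have hx0 : xopt ≠ 0 := hC xopt hxopt
  have hz0 : z ≠ 0 := hC z hz
  set a : ℝ := ‖(inner ℂ xopt y : ℂ)‖ with ha
  set b : ℝ := ‖(inner ℂ z y : ℂ)‖ with hb
  have hnx : (0:ℝ) < ‖xopt‖ := norm_pos_iff.mpr hx0
  have hnz : (0:ℝ) < ‖z‖ := norm_pos_iff.mpr hz0
  have ha0 : 0 ≤ a := norm_nonneg _
  have hb0 : 0 ≤ b := norm_nonneg _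
  -- from hmax: b * ‖xopt‖ ≤ a * ‖z‖
  have hmax' := hmax z hz
  have key : b * ‖xopt‖ ≤ a * ‖z‖ := by
    have h1 : b ^ 2 * ‖xopt‖ ^ 2 ≤ a ^ 2 * ‖z‖ ^ 2 := by
      rw [div_le_div_iff₀ (by positivity) (by positivity)] at hmax'
      linarith
    nlinarith [mul_nonneg ha0 hnz.le, mul_nonneg hb0 hnx.le]
  have hnh : ‖hopt‖ = a / ‖xopt‖ ^ 2 := by
    rw [hh, norm_div, Complex.norm_real, norm_pow, Real.norm_eq_abs,
      _root_.abs_of_nonneg hnx.le]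
  set c : ℝ := a / ‖xopt‖ ^ 2 with hc
  have hc0 : 0 ≤ c := by positivity
  have hca : a = c * ‖xopt‖ ^ 2 := by rw [hc]; field_simp
  -- expand squares
  have exp1 : ‖y - hopt • xopt‖ ^ 2
      = ‖y‖ ^ 2 - 2 * (c ^ 2 * ‖xopt‖ ^ 2) + c ^ 2 * ‖xopt‖ ^ 2 := by
    have h1 : (inner ℂ y xopt : ℂ) = conj (inner ℂ xopt y : ℂ) := (inner_conj_symm _ _).symm
    rw [@norm_sub_sq ℂ, inner_smul_right, norm_smul, h1, hh, mul_pow]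
    have hre : ((inner ℂ xopt y : ℂ) / ((‖xopt‖ ^ 2 : ℝ) : ℂ) * conj (inner ℂ xopt y : ℂ)).re
        = c ^ 2 * ‖xopt‖ ^ 2 := by
      rw [div_mul_eq_mul_div, Complex.mul_conj, ← Complex.ofReal_div, Complex.ofReal_re]
      rw [← Complex.sq_norm, ← ha, hca]
      field_simp
    have hn2 : ‖(inner ℂ xopt y : ℂ) / ((‖xopt‖ ^ 2 : ℝ) : ℂ)‖ ^ 2 = c ^ 2 := by
      rw [← hh, hnh]
    simp only [RCLike.re_to_complex]
    rw [hre, hn2]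
  have exp2 : ‖y - hopt • z‖ ^ 2
      = ‖y‖ ^ 2 - 2 * (hopt * (inner ℂ y z : ℂ)).re + c ^ 2 * ‖z‖ ^ 2 := by
    rw [@norm_sub_sq ℂ, inner_smul_right, norm_smul, mul_pow, hnh]
    simp only [RCLike.re_to_complex]
  have hrebound : (hopt * (inner ℂ y z : ℂ)).re ≤ c * b := by
    calc (hopt * (inner ℂ y z : ℂ)).re ≤ ‖hopt * (inner ℂ y z : ℂ)‖ := Complex.re_le_norm _
    _ = ‖hopt‖ * ‖(inner ℂ y z : ℂ)‖ := norm_mul _ _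
    _ = c * b := by rw [hnh, norm_inner_symm y]
  have hbb : b ≤ c * ‖xopt‖ * ‖z‖ := by
    rw [← mul_le_mul_iff_of_pos_right hnx]
    calc b * ‖xopt‖ ≤ a * ‖z‖ := key
    _ = c * ‖xopt‖ * ‖z‖ * ‖xopt‖ := by rw [hca]; ring
  have hsq : ‖y - hopt • xopt‖ ^ 2 ≤ ‖y - hopt • z‖ ^ 2 := by
    rw [exp1, exp2]
    have h3 : (hopt * (inner ℂ y z : ℂ)).re ≤ c * (c * ‖xopt‖ * ‖z‖) :=
      hrebound.trans (mul_le_mul_of_nonneg_left hbb hc0)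
    nlinarith [sq_nonneg (c * ‖xopt‖ - c * ‖z‖)]
  nlinarith [norm_nonneg (y - hopt • z), norm_nonneg (y - hopt • xopt)]
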